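/- Let λ_i, λ_j be nonnegative integers, both odd, and ω_i = ω_j ∈ Z/2Z. Consider Hom(V_{λ_i}^{ω_i}, V_{λ_j}^{ω_j})₁, the odd part of the Hom space between the irreducible graded sl₂-modules, as a graded sl₂-module under the adjoint action. Then tr(2 − h) on the f-invariants Hom(V_{λ_i}^{ω_i}, V_{λ_j}^{ω_j})₁^f plus tr(2 − h) on Hom(V_{λ_j}^{ω_j}, V_{λ_i}^{ω_i})₁^f minus (λ_i+1)(λ_j+1) equals 2·min{λ_i, λ_j} + 2. -/

import Mathlib

open Matrix

/-- The raising operator of the standard irreducible (l+1)-dimensional sl₂-module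
(`e · v_b = b (l + 1 - b) v_{b-1}`). -/
def sl2e (F : Type*) [Field F] (l : ℕ) : Matrix (Fin (l+1)) (Fin (l+1)) F :=
  Matrix.of fun a b => if (a : ℕ) + 1 = (b : ℕ)
    then (((b : ℕ) * (l + 1 - (b : ℕ)) : ℕ) : F) else 0

/-- The lowering operator (`f · v_b = v_{b+1}`). -/
def sl2f (F : Type*) [Field F] (l : ℕ) : Matrix (Fin (l+1)) (Fin (l+1)) F :=
  Matrix.of fun a b => if (a : ℕ) = (b : ℕ) + 1 then 1 else 0

/-- The Cartan operator (`h · v_a = (l - 2a) v_a`). -/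
def sl2h (F : Type*) [Field F] (l : ℕ) : Matrix (Fin (l+1)) (Fin (l+1)) F :=
  Matrix.of fun a b => if a = b then (((l : ℤ) - 2 * (a : ℕ) : ℤ) : F) else 0

/-- `Hom(V_l^ω, V_m^ω)₁^f`: the odd part (for equal parities `ω` of the highest
weight vectors, oddness of `T` means `T` is supported on entries `(a,b)` with
`a + b` odd) of the Hom-space, intersected with the kernel of the action of `f`. -/
def homOddFInv (F : Type*) [Field F] (l m : ℕ) :
    Submodule F (Matrix (Fin (m+1)) (Fin (l+1)) F) where
  carrier := {T | (∀ (a : Fin (m+1)) (b : Fin (l+1)), ((a : ℕ) + (b : ℕ)) % 2 = 0 → T a b = 0) ∧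
    sl2f F m * T - T * sl2f F l = 0}
  add_mem' := by
    rintro a b ⟨ha1, ha2⟩ ⟨hb1, hb2⟩
    refine ⟨fun i j hij => by simp [Matrix.add_apply, ha1 i j hij, hb1 i j hij], ?_⟩
    have : sl2f F m * (a + b) - (a + b) * sl2f F l
        = (sl2f F m * a - a * sl2f F l) + (sl2f F m * b - b * sl2f F l) := by
      rw [Matrix.mul_add, Matrix.add_mul]; abel
    rw [this, ha2, hb2, add_zero]
  zero_mem' := ⟨fun i j _ => rfl, by simp⟩
  smul_mem' := by
    rintro c a ⟨ha1, ha2⟩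
    refine ⟨fun i j hij => by simp [Matrix.smul_apply, ha1 i j hij], ?_⟩
    simp only [Matrix.mul_smul, Matrix.smul_mul, ← smul_sub, ha2, smul_zero]


section helpers

variable {F : Type*} [Field F] {l m : ℕ}

lemma fmul_apply (T : Matrix (Fin (m+1)) (Fin (l+1)) F) (a : Fin (m+1)) (b : Fin (l+1)) :
    (sl2f F m * T) a b = if h : 0 < (a:ℕ) then T ⟨(a:ℕ)-1, by have := a.isLt; omega⟩ b else 0 := by
  rw [Matrix.mul_apply]
  split_ifs with h
  · rw [Finset.sum_eq_single (⟨(a:ℕ)-1, by have := a.isLt; omega⟩ : Fin (m+1))]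
    · rw [sl2f, Matrix.of_apply, if_pos (by simp; omega), one_mul]
    · intro c _ hc
      have : ¬ ((a:ℕ) = (c:ℕ)+1) := fun hh => hc (Fin.ext (by simp; omega))
      simp [sl2f, this]
    · intro h'; exact absurd (Finset.mem_univ _) h'
  · apply Finset.sum_eq_zero; intro c _
    have : ¬ ((a:ℕ) = (c:ℕ)+1) := by omega
    simp [sl2f, this]

lemma mulf_apply (T : Matrix (Fin (m+1)) (Fin (l+1)) F) (a : Fin (m+1)) (b : Fin (l+1)) :
    (T * sl2f F l) a b = if h : (b:ℕ)+1 < l+1 then T a ⟨(b:ℕ)+1, h⟩ else 0 := by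
  rw [Matrix.mul_apply]
  split_ifs with h
  · rw [Finset.sum_eq_single (⟨(b:ℕ)+1, h⟩ : Fin (l+1))]
    · rw [sl2f, Matrix.of_apply, if_pos (by simp), mul_one]
    · intro c _ hc
      have : ¬ ((c:ℕ) = (b:ℕ)+1) := fun hh => hc (Fin.ext (by simp; omega))
      simp [sl2f, this]
    · intro h'; exact absurd (Finset.mem_univ _) h'
  · apply Finset.sum_eq_zero; intro c _
    have : ¬ ((c:ℕ) = (b:ℕ)+1) := by have := c.isLt; omega
    simp [sl2f, this]

lemma hmul_apply (T : Matrix (Fin (m+1)) (Fin (l+1)) F) (a : Fin (m+1)) (b : Fin (l+1)) :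
    (sl2h F m * T) a b = (((m:ℤ) - 2 * (a:ℕ) : ℤ) : F) * T a b := by
  rw [Matrix.mul_apply, Finset.sum_eq_single a]
  · simp [sl2h]
  · intro c _ hc; rw [sl2h, Matrix.of_apply, if_neg (fun hh => hc hh.symm), zero_mul]
  · intro h'; exact absurd (Finset.mem_univ _) h'

lemma mulh_apply (T : Matrix (Fin (m+1)) (Fin (l+1)) F) (a : Fin (m+1)) (b : Fin (l+1)) :
    (T * sl2h F l) a b = T a b * (((l:ℤ) - 2 * (b:ℕ) : ℤ) : F) := by
  rw [Matrix.mul_apply, Finset.sum_eq_single b]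
  · simp [sl2h]
  · intro c _ hc; rw [sl2h, Matrix.of_apply, if_neg hc, mul_zero]
  · intro h'; exact absurd (Finset.mem_univ _) h'


section rec
variable {T : Matrix (Fin (m+1)) (Fin (l+1)) F}
  (hf : sl2f F m * T = T * sl2f F l)
include hf

lemma rec1 (a b : ℕ) (ha : a + 1 < m + 1) (hb : b + 1 < l + 1) :
    T ⟨a, by omega⟩ ⟨b, by omega⟩ = T ⟨a+1, ha⟩ ⟨b+1, hb⟩ := by
  have h := congrFun (congrFun hf ⟨a+1, ha⟩) ⟨b, by omega⟩
  rw [fmul_apply, mulf_apply] at h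
  rw [dif_pos (by simp), dif_pos (by simpa using hb)] at h
  simpa using h

lemma rec2 (b : ℕ) (hb : b + 1 < l + 1) : T ⟨0, by omega⟩ ⟨b+1, hb⟩ = 0 := by
  have h := congrFun (congrFun hf ⟨0, by omega⟩) ⟨b, by omega⟩
  rw [fmul_apply, mulf_apply] at h
  rw [dif_neg (by simp), dif_pos (by simpa using hb)] at h
  exact h.symm

lemma rec3 (a : ℕ) (ha : a + 1 < m + 1) : T ⟨a, by omega⟩ ⟨l, by omega⟩ = 0 := by
  have h := congrFun (congrFun hf ⟨a+1, ha⟩) ⟨l, by omega⟩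
  rw [fmul_apply, mulf_apply] at h
  rw [dif_pos (by simp), dif_neg (by simp)] at h
  simpa using h

lemma diagT : ∀ (j a : ℕ) (ha : a < m + 1) (hj : j < l + 1), j ≤ a →
    T ⟨a, ha⟩ ⟨j, hj⟩ = T ⟨a - j, by omega⟩ ⟨0, by omega⟩ := by
  intro j
  induction j with
  | zero => intro a ha hj hle; simp
  | succ i ih =>
    intro a ha hj hle
    have h1 := rec1 hf (a-1) i (by omega) (by omega)
    simp only [show a - 1 + 1 = a from by omega, show i + 1 = i + 1 from rfl] at h1
    rw [← h1, ih (a-1) (by omega) (by omega) (by omega)]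
    congr 1
    exact Fin.ext (by simp; omega)

lemma upperT (a : ℕ) : ∀ (b : ℕ) (ha : a < m + 1) (hb : b < l + 1), a < b →
    T ⟨a, ha⟩ ⟨b, hb⟩ = 0 := by
  induction a with
  | zero =>
    intro b ha hb hab
    have h := rec2 hf (b-1) (by omega)
    simpa only [show b - 1 + 1 = b from by omega] using h
  | succ i ih =>
    intro b ha hb hab
    have h1 := rec1 hf i (b-1) (by omega) (by omega)
    simp only [show b - 1 + 1 = b from by omega] at h1
    rw [← h1]
    exact ih (b-1) (by omega) (by omega) (by omega)

end rec


def Emat (F : Type*) [Field F] (l m d : ℕ) : Matrix (Fin (m+1)) (Fin (l+1)) F :=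
  Matrix.of fun a b => if (a:ℕ) = (b:ℕ) + d then 1 else 0

lemma Emat_mem (d : ℕ) (hd2 : d % 2 = 1) (hdm : d ≤ m) (hml : m ≤ l + d) :
    Emat F l m d ∈ homOddFInv F l m := by
  constructor
  · intro a b hab
    rw [Emat, Matrix.of_apply, if_neg]
    omega
  · rw [sub_eq_zero]
    ext a b
    rw [Matrix.mul_apply, Matrix.mul_apply]
    by_cases hab : (a:ℕ) = (b:ℕ) + d + 1
    · have hbd : (b:ℕ) + d < m + 1 := by have := a.isLt; omega
      have hb1 : (b:ℕ) + 1 < l + 1 := by have := a.isLt; omega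
      rw [Finset.sum_eq_single (⟨(b:ℕ)+d, hbd⟩ : Fin (m+1)),
          Finset.sum_eq_single (⟨(b:ℕ)+1, hb1⟩ : Fin (l+1))]
      · simp only [Emat, sl2f, Matrix.of_apply]
        simp [hab, show (a:ℕ) = (b:ℕ)+1+d from by omega]
        omega
      · intro c _ hc
        have : ¬ ((c:ℕ) = (b:ℕ) + 1) := fun hh => hc (Fin.ext (by simpa using hh))
        simp [sl2f, this]
      · intro h'; exact absurd (Finset.mem_univ _) h'
      · intro c _ hc
        have : ¬ ((c:ℕ) = (b:ℕ) + d) := fun hh => hc (Fin.ext (by simpa using hh))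
        simp [Emat, this]
      · intro h'; exact absurd (Finset.mem_univ _) h'
    · rw [Finset.sum_eq_zero, Finset.sum_eq_zero]
      · intro c _
        by_cases h1 : (c:ℕ) = (b:ℕ) + 1
        · have : ¬ ((a:ℕ) = (c:ℕ) + d) := by omega
          simp [Emat, this]
        · simp [sl2f, h1]
      · intro c _
        by_cases h1 : (c:ℕ) = (b:ℕ) + d
        · have : ¬ ((a:ℕ) = (c:ℕ) + 1) := by omega
          simp [sl2f, this]
        · simp [Emat, h1]

lemma Trep (hl : l % 2 = 1) (hm : m % 2 = 1) {T : Matrix (Fin (m+1)) (Fin (l+1)) F}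
    (hT : T ∈ homOddFInv F l m) :
    T = ∑ k ∈ Finset.range ((min l m + 1)/2),
      T ⟨m - 2*k, by omega⟩ ⟨0, by omega⟩ • Emat F l m (m - 2*k) := by
  obtain ⟨hodd, hfrel⟩ := hT
  have hf : sl2f F m * T = T * sl2f F l := sub_eq_zero.mp hfrel
  ext a b
  rw [Matrix.sum_apply]
  simp only [Matrix.smul_apply, Emat, Matrix.of_apply, smul_eq_mul]
  by_cases hgood : (b:ℕ) ≤ (a:ℕ) ∧ ((a:ℕ) - (b:ℕ)) % 2 = 1 ∧ m ≤ l + ((a:ℕ) - (b:ℕ))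
  · obtain ⟨hba, hd2, hmld⟩ := hgood
    set d : ℕ := (a:ℕ) - (b:ℕ) with hd
    have hdm : d ≤ m := by have := a.isLt; omega
    have hk0 : (m - d)/2 ∈ Finset.range ((min l m + 1)/2) := by
      rw [Finset.mem_range]; omega
    rw [Finset.sum_eq_single ((m - d)/2)]
    · rw [if_pos (by omega), mul_one]
      have := diagT hf (b:ℕ) (a:ℕ) a.isLt b.isLt hba
      simp only [Fin.eta] at this
      rw [this]
      congr 1 <;> exact Fin.ext (by simp; omega)
    · intro k hk hkne
      rw [Finset.mem_range] at hk
      rw [if_neg (by omega), mul_zero]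
    · intro h'; exact absurd hk0 h'
  · rw [Finset.sum_eq_zero]
    · by_cases hba : (b:ℕ) ≤ (a:ℕ)
      · by_cases hd2 : ((a:ℕ) - (b:ℕ)) % 2 = 1
        · have hmld : l + ((a:ℕ) - (b:ℕ)) < m := by omega
          have h1 := diagT hf (b:ℕ) (a:ℕ) a.isLt b.isLt hba
          simp only [Fin.eta] at h1
          have h2 := diagT hf l (((a:ℕ)-(b:ℕ)) + l) (by omega) (by omega) (by omega)
          have h3 := rec3 hf (((a:ℕ)-(b:ℕ)) + l) (by omega)
          rw [h3] at h2
          rw [h1]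
          have h4 : T ⟨(a:ℕ)-(b:ℕ), by have := a.isLt; omega⟩ ⟨0, by omega⟩
              = T ⟨((a:ℕ)-(b:ℕ)) + l - l, by omega⟩ ⟨0, by omega⟩ := by
            congr 1
            exact Fin.ext (by show ((a:ℕ)-(b:ℕ)) = ((a:ℕ)-(b:ℕ)) + l - l; omega)
          rw [h4]
          exact h2.symm
        · exact hodd a b (by omega)
      · simpa using upperT hf (a:ℕ) (b:ℕ) a.isLt b.isLt (by omega)
    · intro k hk
      rw [Finset.mem_range] at hk
      rw [if_neg, mul_zero]
      intro hcon
      exact hgood ⟨by omega, by omega, by omega⟩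


lemma trace_aux (F : Type*) [Field F] (l m : ℕ) (hl : l % 2 = 1) (hm : m % 2 = 1)
    (T1 : Module.End F ↥(homOddFInv F l m))
    (hT1 : ∀ v : ↥(homOddFInv F l m),
      (T1 v : Matrix (Fin (m+1)) (Fin (l+1)) F)
        = (2 : F) • (v : Matrix (Fin (m+1)) (Fin (l+1)) F)
          - (sl2h F m * (v : Matrix (Fin (m+1)) (Fin (l+1)) F)
            - (v : Matrix (Fin (m+1)) (Fin (l+1)) F) * sl2h F l)) :
    LinearMap.trace F _ T1
      = ∑ k ∈ Finset.range ((min l m + 1)/2), ((2:F) + l + m - 4*k) := by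
  set N := (min l m + 1)/2 with hN
  have hkle : ∀ k : Fin N, 2*(k:ℕ) + 1 ≤ min l m := fun k => by
    have := k.isLt; omega
  let Φ : ↥(homOddFInv F l m) →ₗ[F] (Fin N → F) :=
    { toFun := fun T k => (T : Matrix (Fin (m+1)) (Fin (l+1)) F)
        ⟨m - 2*(k:ℕ), by omega⟩ ⟨0, by omega⟩
      map_add' := fun x y => by funext k; simp
      map_smul' := fun c x => by funext k; simp }
  let Ψ : (Fin N → F) →ₗ[F] ↥(homOddFInv F l m) :=
    { toFun := fun c => ∑ k : Fin N, c k •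
        (⟨Emat F l m (m - 2*(k:ℕ)), Emat_mem _ (by have := hkle k; omega)
          (by omega) (by have := hkle k; omega)⟩ : ↥(homOddFInv F l m))
      map_add' := fun c d => by
        rw [← Finset.sum_add_distrib]
        exact Finset.sum_congr rfl fun k _ => by rw [Pi.add_apply, add_smul]
      map_smul' := fun r c => by
        simp only [RingHom.id_apply]
        rw [Finset.smul_sum]
        exact Finset.sum_congr rfl fun k _ => by rw [Pi.smul_apply, smul_eq_mul, mul_smul] }
  have hΦΨ : Φ.comp Ψ = LinearMap.id := by
    apply LinearMap.ext; intro c; funext k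
    show ((∑ k' : Fin N, c k' • (⟨Emat F l m (m - 2*(k':ℕ)), _⟩ : ↥(homOddFInv F l m))
      : ↥(homOddFInv F l m)) : Matrix (Fin (m+1)) (Fin (l+1)) F) ⟨m - 2*(k:ℕ), _⟩ ⟨0, _⟩ = c k
    rw [AddSubmonoidClass.coe_finset_sum, Matrix.sum_apply]
    rw [Finset.sum_eq_single k]
    · simp [Emat]
    · intro k' _ hk'
      have h1 := hkle k; have h2 := hkle k'
      have h3 : (k':ℕ) ≠ (k:ℕ) := fun hh => hk' (Fin.ext hh)
      rw [SetLike.val_smul, Matrix.smul_apply]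
      simp only [Emat, Matrix.of_apply]
      rw [if_neg (by simp; omega), smul_zero]
    · intro h'; exact absurd (Finset.mem_univ _) h'
  have hΨΦ : Ψ.comp Φ = LinearMap.id := by
    apply LinearMap.ext; intro T
    apply Subtype.ext
    show ((∑ k : Fin N, (T : Matrix (Fin (m+1)) (Fin (l+1)) F) ⟨m - 2*(k:ℕ), _⟩ ⟨0, _⟩ •
      (⟨Emat F l m (m - 2*(k:ℕ)), _⟩ : ↥(homOddFInv F l m))
      : ↥(homOddFInv F l m)) : Matrix (Fin (m+1)) (Fin (l+1)) F) = T
    rw [AddSubmonoidClass.coe_finset_sum]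
    exact (Fin.sum_univ_eq_sum_range (fun k =>
      (T : Matrix (Fin (m+1)) (Fin (l+1)) F) ⟨m - 2*k, by omega⟩ ⟨0, by omega⟩ •
        Emat F l m (m - 2*k)) N).trans (Trep hl hm T.2).symm
  let e : ↥(homOddFInv F l m) ≃ₗ[F] (Fin N → F) := LinearEquiv.ofLinear Φ Ψ hΦΨ hΨΦ
  let b : Module.Basis (Fin N) F ↥(homOddFInv F l m) := Module.Basis.ofEquivFun e
  have hdiag : ∀ (v : ↥(homOddFInv F l m)) (k : Fin N),
      Φ (T1 v) k = ((2:F) + l + m - 4*(k:ℕ)) * Φ v k := by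
    intro v k
    have h1 := hkle k
    have h2k : 2*(k:ℕ) ≤ m := by omega
    simp only [Φ, LinearMap.coe_mk, AddHom.coe_mk]
    rw [hT1 v, Matrix.sub_apply, Matrix.sub_apply, Matrix.smul_apply,
      hmul_apply, mulh_apply]
    simp only [Fin.val_mk, smul_eq_mul]
    push_cast [Nat.cast_sub h2k]
    ring
  rw [LinearMap.trace_eq_matrix_trace F b T1, Matrix.trace]
  have hentry : ∀ k : Fin N,
      (LinearMap.toMatrix b b T1).diag k = (2:F) + l + m - 4*(k:ℕ) := by
    intro k
    rw [Matrix.diag]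
    rw [LinearMap.toMatrix_apply]
    have h1 : (b.repr (T1 (b k))) k = Φ (T1 (b k)) k := Module.Basis.ofEquivFun_repr_apply e _ k
    rw [h1, hdiag]
    have h2 : Φ (b k) k = (b.repr (b k)) k := (Module.Basis.ofEquivFun_repr_apply e _ k).symm
    rw [h2, Module.Basis.repr_self, Finsupp.single_eq_same, mul_one]
  rw [Finset.sum_congr rfl (fun k _ => hentry k)]
  exact Fin.sum_univ_eq_sum_range (fun k => (2:F) + l + m - 4*k) N


lemma arith (L M NN G : ℤ) (h1 : 2*NN = L+1) (h2 : 2*G = NN*(NN-1)) :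
    NN*(4+2*L+2*M) - 8*G = (L+1)*(M+1) + 2*L + 2 := by
  linear_combination (M + 3 - 2*NN) * h1 + (-4) * h2


end helpers

/-- for odd highest weights `l, m` and equal parities, the sum of the
traces of `2 − h` on `Hom(V_l, V_m)₁^f` and on `Hom(V_m, V_l)₁^f`, minus
`(l+1)(m+1)`, equals `2·min(l,m) + 2`. -/
theorem stmt_7 (F : Type*) [Field F] [CharZero F] (l m : ℕ) (hl : Odd l) (hm : Odd m)
    (T1 : Module.End F ↥(homOddFInv F l m))
    (hT1 : ∀ v : ↥(homOddFInv F l m),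
      (T1 v : Matrix (Fin (m+1)) (Fin (l+1)) F)
        = (2 : F) • (v : Matrix (Fin (m+1)) (Fin (l+1)) F)
          - (sl2h F m * (v : Matrix (Fin (m+1)) (Fin (l+1)) F)
            - (v : Matrix (Fin (m+1)) (Fin (l+1)) F) * sl2h F l))
    (T2 : Module.End F ↥(homOddFInv F m l))
    (hT2 : ∀ v : ↥(homOddFInv F m l),
      (T2 v : Matrix (Fin (l+1)) (Fin (m+1)) F)
        = (2 : F) • (v : Matrix (Fin (l+1)) (Fin (m+1)) F)
          - (sl2h F l * (v : Matrix (Fin (l+1)) (Fin (m+1)) F)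
            - (v : Matrix (Fin (l+1)) (Fin (m+1)) F) * sl2h F m)) :
    LinearMap.trace F _ T1 + LinearMap.trace F _ T2
      = (((l + 1) * (m + 1) + 2 * min l m + 2 : ℕ) : F) := by
  have hl' : l % 2 = 1 := Nat.odd_iff.mp hl
  have hm' : m % 2 = 1 := Nat.odd_iff.mp hm
  rw [trace_aux F l m hl' hm' T1 hT1, trace_aux F m l hm' hl' T2 hT2, min_comm m l,
    ← Finset.sum_add_distrib]
  set N := (min l m + 1)/2 with hN
  have hNmin : 2 * N = min l m + 1 := by omega
  have hN1 : 1 ≤ N := by omega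
  have hterm : ∀ k ∈ Finset.range N, (((2:F)+l+m-4*k) + ((2:F)+m+l-4*k))
      = (((4 + 2*(l:ℤ) + 2*(m:ℤ)) - 8*(k:ℤ) : ℤ) : F) := by
    intro k _; push_cast; ring
  rw [Finset.sum_congr rfl hterm, ← Int.cast_sum]
  have hGZ : 2 * (∑ k ∈ Finset.range N, (k:ℤ)) = (N:ℤ) * ((N:ℤ) - 1) := by
    have h := Finset.sum_range_id_mul_two N
    zify [hN1] at h
    linarith [h]
  have hzsum : (∑ k ∈ Finset.range N, ((4 + 2*(l:ℤ) + 2*(m:ℤ)) - 8*(k:ℤ)))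
      = ((l:ℤ)+1)*((m:ℤ)+1) + 2*((min l m : ℕ) : ℤ) + 2 := by
    rw [Finset.sum_sub_distrib, Finset.sum_const, Finset.card_range, ← Finset.mul_sum,
      nsmul_eq_mul]
    rcases min_choice l m with hc | hc <;> rw [hc]
    · have h1 : 2*(N:ℤ) = (l:ℤ) + 1 := by rw [hc] at hNmin; exact_mod_cast hNmin
      linear_combination arith (l:ℤ) (m:ℤ) (N:ℤ) (∑ k ∈ Finset.range N, (k:ℤ)) h1 hGZ
    · have h1 : 2*(N:ℤ) = (m:ℤ) + 1 := by rw [hc] at hNmin; exact_mod_cast hNmin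
      linear_combination arith (m:ℤ) (l:ℤ) (N:ℤ) (∑ k ∈ Finset.range N, (k:ℤ)) h1 hGZ
  rw [hzsum]
  have hfin : (((l + 1) * (m + 1) + 2 * min l m + 2 : ℕ) : ℤ)
      = ((l:ℤ)+1)*((m:ℤ)+1) + 2*((min l m : ℕ) : ℤ) + 2 := by push_cast; ring
  rw [← hfin, Int.cast_natCast]
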